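/- Let ℋ be a symmetric d×d real matrix with ‖ℋ‖ ≤ ℓ, eigenvalues λ_j and an orthonormal eigenbasis; let 𝒮^c be the set of indices j with λ_j ∈ [−ℓ, θ²/(η(2−θ)²)]. Assume 0 < θ ≤ 1/4, η = 1/(4ℓ), and let 𝒯 = √κ·χ·c with κ = ℓ/√(ϱε) and constants χ, c ≥ 1. For each j, set x = ηλ_j, let A_j be the 2×2 matrix [[(2−θ)(1−x), −(1−θ)(1−x)], [1, 0]], define a_τ^{(j)} = (1 0)·A_j^τ·(1 0)ᵀ and p_τ^{(j)} = a_{𝒯−1−τ}^{(j)} / ∑_{τ'=0}^{𝒯−1} a_{τ'}^{(j)}. If the vectors e_0, ..., e_{𝒯−1} ∈ ℝ^d satisfy max_τ ‖e_τ‖ < ε/(χ·c·√(2𝒯)), then ∑_{j ∈ 𝒮^c} |∑_{τ=0}^{𝒯−1} p_τ^{(j)} e_τ^{(j)}|² ≤ ε², where e_τ^{(j)} denotes the component of e_τ along the j-th eigenvector of ℋ. -/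

import Mathlib

open scoped RealInnerProductSpace Classical

/-- The 2×2 transition matrix of the AGD recursion in the eigendirection with `x = ηλ`:
`A = [[(2−θ)(1−x), −(1−θ)(1−x)], [1, 0]]`. -/
def agdMat (θ x : ℝ) : Matrix (Fin 2) (Fin 2) ℝ :=
  !![(2 - θ) * (1 - x), -((1 - θ) * (1 - x)); 1, 0]

lemma agdMat_mul_apply00 (θ x : ℝ) (M : Matrix (Fin 2) (Fin 2) ℝ) :
    (agdMat θ x * M) 0 0 = (2 - θ) * (1 - x) * M 0 0 - (1 - θ) * (1 - x) * M 1 0 := by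
  simp only [agdMat, Matrix.mul_apply, Fin.sum_univ_two]
  norm_num [Matrix.cons_val_zero, Matrix.cons_val_one]
  ring

lemma agdMat_mul_apply10 (θ x : ℝ) (M : Matrix (Fin 2) (Fin 2) ℝ) :
    (agdMat θ x * M) 1 0 = M 0 0 := by
  simp only [agdMat, Matrix.mul_apply, Fin.sum_univ_two]
  norm_num [Matrix.cons_val_zero, Matrix.cons_val_one]

lemma agdMat_pow_recur (θ x : ℝ) (τ : ℕ) :
    (agdMat θ x ^ (τ + 2)) 0 0 =
      (2 - θ) * (1 - x) * (agdMat θ x ^ (τ + 1)) 0 0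
        - (1 - θ) * (1 - x) * (agdMat θ x ^ τ) 0 0 := by
  have h10 : (agdMat θ x ^ (τ + 1)) 1 0 = (agdMat θ x ^ τ) 0 0 := by
    rw [pow_succ', agdMat_mul_apply10]
  rw [show τ + 2 = (τ + 1) + 1 from rfl, pow_succ', agdMat_mul_apply00, h10]

set_option maxHeartbeats 1000000

lemma agdMat_pow_pos (θ x : ℝ) (hs : 0 < (2 - θ) * (1 - x))
    (hp : 0 ≤ (1 - θ) * (1 - x))
    (hd : 4 * ((1 - θ) * (1 - x)) ≤ ((2 - θ) * (1 - x)) ^ 2) :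
    ∀ τ, 0 < (agdMat θ x ^ τ) 0 0 ∧
      (2 - θ) * (1 - x) / 2 * (agdMat θ x ^ τ) 0 0 ≤ (agdMat θ x ^ (τ + 1)) 0 0 := by
  set s := (2 - θ) * (1 - x) with hsdef
  set p := (1 - θ) * (1 - x) with hpdef
  intro τ
  induction τ with
  | zero =>
    have h0 : (agdMat θ x ^ 0) 0 0 = 1 := by simp
    have h1 : (agdMat θ x ^ 1) 0 0 = s := by simp [agdMat]; rfl
    refine ⟨by rw [h0]; norm_num, ?_⟩
    rw [h0, h1]; nlinarith
  | succ n ih =>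
    obtain ⟨hpos, hratio⟩ := ih
    have hpos' : 0 < (agdMat θ x ^ (n + 1)) 0 0 :=
      lt_of_lt_of_le (by positivity) hratio
    refine ⟨hpos', ?_⟩
    have hrec := agdMat_pow_recur θ x n
    have h1 : p * (agdMat θ x ^ n) 0 0 ≤ 2 * p / s * (agdMat θ x ^ (n + 1)) 0 0 := by
      have h := mul_le_mul_of_nonneg_left hratio hp
      rw [div_mul_eq_mul_div, le_div_iff₀ hs]
      nlinarith
    have h2 : s / 2 ≤ s - 2 * p / s := by
      have : 2 * p / s ≤ s / 2 := by
        rw [div_le_div_iff₀ hs (by norm_num)]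
        nlinarith
      linarith
    calc s / 2 * (agdMat θ x ^ (n + 1)) 0 0
        ≤ (s - 2 * p / s) * (agdMat θ x ^ (n + 1)) 0 0 :=
          mul_le_mul_of_nonneg_right h2 hpos'.le
      _ = s * (agdMat θ x ^ (n + 1)) 0 0 - 2 * p / s * (agdMat θ x ^ (n + 1)) 0 0 := by ring
      _ ≤ s * (agdMat θ x ^ (n + 1)) 0 0 - p * (agdMat θ x ^ n) 0 0 := by linarith
      _ = (agdMat θ x ^ (n + 2)) 0 0 := hrec.symm

/-- (Accumulated gradient error in the flat/negative subspace `𝒮ᶜ`.)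
With `a_τ^{(j)} = (1 0)·A_j^τ·(1 0)ᵀ` and `p_τ^{(j)} = a_{𝒯−1−τ}^{(j)}/∑_{τ'<𝒯} a_{τ'}^{(j)}`,
if `max_τ ‖e_τ‖ < ε/(χc√(2𝒯))` then
`∑_{j ∈ 𝒮ᶜ} |∑_{τ<𝒯} p_τ^{(j)} e_τ^{(j)}|² ≤ ε²`. -/
theorem accumulated_error_flat_subspace {d : ℕ}
    (ℓ ϱ ε θ η χ c : ℝ) (T : ℕ)
    (hℓ : 0 < ℓ) (hϱ : 0 < ϱ) (hε : 0 < ε)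
    (hθ : 0 < θ) (hθ' : θ ≤ 1 / 4)
    (hη : η = 1 / (4 * ℓ))
    (hχ : 1 ≤ χ) (hc : 1 ≤ c)
    (hT : (T : ℝ) = Real.sqrt (ℓ / Real.sqrt (ϱ * ε)) * χ * c)
    (b : OrthonormalBasis (Fin d) ℝ (EuclideanSpace ℝ (Fin d)))
    (H : EuclideanSpace ℝ (Fin d) →L[ℝ] EuclideanSpace ℝ (Fin d))
    (lam : Fin d → ℝ)
    (hHb : ∀ j, H (b j) = lam j • b j)
    (hHnorm : ‖H‖ ≤ ℓ)
    (e : ℕ → EuclideanSpace ℝ (Fin d))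
    (he : ∀ τ, τ < T → ‖e τ‖ < ε / (χ * c * Real.sqrt (2 * T))) :
    ∑ j ∈ Finset.univ.filter
        (fun j => -ℓ ≤ lam j ∧ lam j ≤ θ ^ 2 / (η * (2 - θ) ^ 2)),
      (∑ τ ∈ Finset.range T,
        (agdMat θ (η * lam j) ^ (T - 1 - τ)) 0 0 /
          (∑ τ' ∈ Finset.range T, (agdMat θ (η * lam j) ^ τ') 0 0) * ⟪b j, e τ⟫) ^ 2
      ≤ ε ^ 2 := by
  have hηpos : 0 < η := by rw [hη]; positivity
  have hκpos : 0 < Real.sqrt (ℓ / Real.sqrt (ϱ * ε)) := by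
    apply Real.sqrt_pos.mpr
    positivity
  have hTpos : 0 < (T : ℝ) := by rw [hT]; positivity
  have hT1 : 1 ≤ T := by
    by_contra h
    push_neg at h
    interval_cases T
    simp at hTpos
  have key : ∀ j ∈ Finset.univ.filter
      (fun j => -ℓ ≤ lam j ∧ lam j ≤ θ ^ 2 / (η * (2 - θ) ^ 2)),
      (∑ τ ∈ Finset.range T,
        (agdMat θ (η * lam j) ^ (T - 1 - τ)) 0 0 /
          (∑ τ' ∈ Finset.range T, (agdMat θ (η * lam j) ^ τ') 0 0) * ⟪b j, e τ⟫) ^ 2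
        ≤ ∑ τ ∈ Finset.range T, ⟪b j, e τ⟫ ^ 2 := by
    intro j hj
    simp only [Finset.mem_filter] at hj
    set x := η * lam j with hx
    have hθ2 : (0:ℝ) < 2 - θ := by linarith
    have hxle : x ≤ θ ^ 2 / (2 - θ) ^ 2 := by
      have h := hj.2.2
      have h' : η * lam j ≤ η * (θ ^ 2 / (η * (2 - θ) ^ 2)) :=
        mul_le_mul_of_nonneg_left h hηpos.le
      calc x ≤ η * (θ ^ 2 / (η * (2 - θ) ^ 2)) := h'
        _ = θ ^ 2 / (2 - θ) ^ 2 := by field_simp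
    have hx1 : x < 1 := by
      have : θ ^ 2 / (2 - θ) ^ 2 < 1 := by
        rw [div_lt_one (by positivity)]
        nlinarith
      linarith
    have hs : 0 < (2 - θ) * (1 - x) := by nlinarith
    have hp : 0 ≤ (1 - θ) * (1 - x) := by nlinarith
    have hd : 4 * ((1 - θ) * (1 - x)) ≤ ((2 - θ) * (1 - x)) ^ 2 := by
      have h2 : x * (2 - θ) ^ 2 ≤ θ ^ 2 := by
        have h := mul_le_mul_of_nonneg_right hxle (sq_nonneg (2 - θ))
        calc x * (2 - θ) ^ 2 ≤ θ ^ 2 / (2 - θ) ^ 2 * (2 - θ) ^ 2 := h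
          _ = θ ^ 2 := by field_simp
      nlinarith [sq_nonneg (1 - x)]
    have ha := agdMat_pow_pos θ x hs hp hd
    set a : ℕ → ℝ := fun τ => (agdMat θ x ^ τ) 0 0 with hadef
    have hapos : ∀ τ, 0 < a τ := fun τ => (ha τ).1
    set Sa := ∑ τ' ∈ Finset.range T, a τ' with hSa
    have hSapos : 0 < Sa := by
      apply Finset.sum_pos (fun i _ => hapos i)
      exact Finset.nonempty_range_iff.mpr (by omega)
    have hsum_p : ∑ τ ∈ Finset.range T, a (T - 1 - τ) / Sa = 1 := by
      rw [← Finset.sum_div, Finset.sum_range_reflect, div_self hSapos.ne']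
    have hple : ∀ τ ∈ Finset.range T, a (T - 1 - τ) / Sa ≤ 1 := by
      intro τ hτ
      rw [div_le_one hSapos]
      apply Finset.single_le_sum (f := a) (fun i _ => (hapos i).le)
      simp only [Finset.mem_range] at hτ ⊢; omega
    have hcs := Finset.sum_mul_sq_le_sq_mul_sq (Finset.range T)
      (fun τ => a (T - 1 - τ) / Sa) (fun τ => ⟪b j, e τ⟫)
    have hp2 : ∑ τ ∈ Finset.range T, (a (T - 1 - τ) / Sa) ^ 2 ≤ 1 := by
      calc ∑ τ ∈ Finset.range T, (a (T - 1 - τ) / Sa) ^ 2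
          ≤ ∑ τ ∈ Finset.range T, a (T - 1 - τ) / Sa := by
            apply Finset.sum_le_sum
            intro τ hτ
            have h0 : 0 ≤ a (T - 1 - τ) / Sa := div_nonneg (hapos _).le hSapos.le
            nlinarith [hple τ hτ]
        _ = 1 := hsum_p
    calc (∑ τ ∈ Finset.range T, a (T - 1 - τ) / Sa * ⟪b j, e τ⟫) ^ 2
        ≤ (∑ τ ∈ Finset.range T, (a (T - 1 - τ) / Sa) ^ 2) *
            ∑ τ ∈ Finset.range T, ⟪b j, e τ⟫ ^ 2 := hcs
      _ ≤ 1 * ∑ τ ∈ Finset.range T, ⟪b j, e τ⟫ ^ 2 := by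
          apply mul_le_mul_of_nonneg_right hp2
          positivity
      _ = ∑ τ ∈ Finset.range T, ⟪b j, e τ⟫ ^ 2 := one_mul _
  have parseval : ∀ τ : ℕ, ∑ j : Fin d, ⟪b j, e τ⟫ ^ 2 = ‖e τ‖ ^ 2 := by
    intro τ
    have h := b.sum_inner_mul_inner (e τ) (e τ)
    rw [real_inner_self_eq_norm_sq] at h
    rw [← h]
    apply Finset.sum_congr rfl
    intro i _
    rw [real_inner_comm (e τ) (b i)]
    ring
  have hebound : ∀ τ ∈ Finset.range T,
      ‖e τ‖ ^ 2 ≤ ε ^ 2 / ((χ * c) ^ 2 * (2 * T)) := by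
    intro τ hτ
    have h := (he τ (Finset.mem_range.mp hτ)).le
    have h2 : ‖e τ‖ ^ 2 ≤ (ε / (χ * c * Real.sqrt (2 * T))) ^ 2 :=
      pow_le_pow_left₀ (norm_nonneg _) h 2
    calc ‖e τ‖ ^ 2 ≤ (ε / (χ * c * Real.sqrt (2 * T))) ^ 2 := h2
      _ = ε ^ 2 / ((χ * c) ^ 2 * (2 * T)) := by
          rw [div_pow, mul_pow, Real.sq_sqrt (by positivity)]
  calc ∑ j ∈ Finset.univ.filter
        (fun j => -ℓ ≤ lam j ∧ lam j ≤ θ ^ 2 / (η * (2 - θ) ^ 2)),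
      (∑ τ ∈ Finset.range T,
        (agdMat θ (η * lam j) ^ (T - 1 - τ)) 0 0 /
          (∑ τ' ∈ Finset.range T, (agdMat θ (η * lam j) ^ τ') 0 0) * ⟪b j, e τ⟫) ^ 2
      ≤ ∑ j ∈ Finset.univ.filter
          (fun j => -ℓ ≤ lam j ∧ lam j ≤ θ ^ 2 / (η * (2 - θ) ^ 2)),
          ∑ τ ∈ Finset.range T, ⟪b j, e τ⟫ ^ 2 := Finset.sum_le_sum key
    _ ≤ ∑ j : Fin d, ∑ τ ∈ Finset.range T, ⟪b j, e τ⟫ ^ 2 := by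
        apply Finset.sum_le_sum_of_subset_of_nonneg (Finset.filter_subset _ _)
        intro i _ _
        positivity
    _ = ∑ τ ∈ Finset.range T, ∑ j : Fin d, ⟪b j, e τ⟫ ^ 2 := Finset.sum_comm
    _ = ∑ τ ∈ Finset.range T, ‖e τ‖ ^ 2 :=
        Finset.sum_congr rfl (fun τ _ => parseval τ)
    _ ≤ ∑ τ ∈ Finset.range T, ε ^ 2 / ((χ * c) ^ 2 * (2 * T)) :=
        Finset.sum_le_sum hebound
    _ = T * (ε ^ 2 / ((χ * c) ^ 2 * (2 * T))) := by
        rw [Finset.sum_const, Finset.card_range, nsmul_eq_mul]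
    _ = ε ^ 2 / (2 * (χ * c) ^ 2) := by
        rw [eq_div_iff (by positivity)]
        field_simp
    _ ≤ ε ^ 2 := by
        rw [div_le_iff₀ (by positivity)]
        have hcc : 1 ≤ χ * c := by nlinarith
        have hcc2 : (1:ℝ) ≤ (χ * c) ^ 2 := by nlinarith
        nlinarith [mul_le_mul_of_nonneg_left hcc2 (sq_nonneg ε)]
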